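/- Fix an integer D ≥ 2, dimensions d_1 = d_x, d_2, …, d_D, d_{D+1} = d_y, a symmetric positive semidefinite Σ ∈ ℝ^{d_x×d_x}, and V ∈ ℝ^{d_y×d_x}. For matrices W_k ∈ ℝ^{d_{k+1}×d_k} (k = 1,…,D), define A_k = W_D⋯W_{k+1} (with A_D = I_{d_y}), B_k = W_{k−1}⋯W_1 (with B_1 = I_{d_x}), and T(W_1,…,W_D) = Σ_{k=1}^D Tr[A_kᵀA_k]·Tr[B_k Σ B_kᵀ]. Then for any W_1,…,W_D satisfying the constraint W_D⋯W_1 = V, one has T(W_1,…,W_D) ≥ D · (‖V·Σ^{1/2}‖_*)^{2(D−1)/D} · (d_y · Tr Σ)^{1/D}, where Σ^{1/2} is the positive semidefinite square root of Σ and ‖·‖_* is the nuclear norm (sum of singular values). -/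

import Mathlib

open Matrix Finset

/-- The product `W_{i+l-1} ⋯ W_i` of a chain of matrices with dimensions `d`. -/
def mulChain (d : ℕ → ℕ) (W : ∀ k, Matrix (Fin (d (k + 1))) (Fin (d k)) ℝ) (i : ℕ) :
    (l : ℕ) → Matrix (Fin (d (i + l))) (Fin (d i)) ℝ
  | 0 => (1 : Matrix (Fin (d i)) (Fin (d i)) ℝ)
  | l + 1 => W (i + l) * mulChain d W i l

/-- The product `W_{l-1} ⋯ W_0` of the first `l` matrices of a chain. -/
def prodUpTo (d : ℕ → ℕ) (W : ∀ k, Matrix (Fin (d (k + 1))) (Fin (d k)) ℝ) :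
    (l : ℕ) → Matrix (Fin (d l)) (Fin (d 0)) ℝ
  | 0 => 1
  | l + 1 => W l * prodUpTo d W l

/-- The sharpness of a `D`-layer deep linear network with input covariance `Sx`:
`T = Σ_{k=1}^D Tr[A_kᵀA_k]·Tr[B_k Sx B_kᵀ]` where `A_k = W_D⋯W_{k+1}` (`A_D = I`)
and `B_k = W_{k−1}⋯W_1` (`B_1 = I`); this is the trace of the Hessian of the
population MSE loss. (Indices are 0-based here: the paper's `W_k` is `W (k-1)`.) -/
noncomputable def sharpnessT (d : ℕ → ℕ) (W : ∀ k, Matrix (Fin (d (k + 1))) (Fin (d k)) ℝ)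
    (Sx : Matrix (Fin (d 0)) (Fin (d 0)) ℝ) (D : ℕ) : ℝ :=
  ∑ k ∈ Finset.range D,
    ((mulChain d W (k + 1) (D - (k + 1)))ᵀ * mulChain d W (k + 1) (D - (k + 1))).trace *
      (prodUpTo d W k * Sx * (prodUpTo d W k)ᵀ).trace

/-- The square root of a positive semidefinite matrix (the definition removed from Mathlib). -/
noncomputable def Matrix.PosSemidef.sqrt {n : Type*} [Fintype n] [DecidableEq n]
    {A : Matrix n n ℝ} (hA : A.PosSemidef) : Matrix n n ℝ :=
  hA.1.eigenvectorUnitary.1 * diagonal ((↑) ∘ (√·) ∘ hA.1.eigenvalues) *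
    (star hA.1.eigenvectorUnitary : Matrix n n ℝ)

/-- The nuclear norm of a real matrix: the sum of its singular values,
i.e. `Tr((MᴴM)^{1/2})`. -/
noncomputable def nuclearNorm {m n : ℕ} (M : Matrix (Fin m) (Fin n) ℝ) : ℝ :=
  ((Matrix.posSemidef_conjTranspose_mul_self M).sqrt).trace

lemma trace_transpose_mul_self_nonneg {m n : ℕ} (M : Matrix (Fin m) (Fin n) ℝ) :
    0 ≤ (Mᵀ * M).trace := by
  rw [Matrix.trace]
  refine Finset.sum_nonneg fun i _ => ?_
  simp only [Matrix.diag_apply, Matrix.mul_apply, Matrix.transpose_apply]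
  exact Finset.sum_nonneg fun j _ => mul_self_nonneg _

lemma frob_cs {m n : ℕ} (P Q : Matrix (Fin m) (Fin n) ℝ) :
    (Pᵀ * Q).trace ≤ Real.sqrt ((Pᵀ * P).trace) * Real.sqrt ((Qᵀ * Q).trace) := by
  have etr : ∀ (R S : Matrix (Fin m) (Fin n) ℝ),
      (Rᵀ * S).trace = ∑ ij ∈ Finset.univ ×ˢ (Finset.univ : Finset (Fin n)),
        R ij.1 ij.2 * S ij.1 ij.2 := by
    intro R S
    rw [Finset.sum_product]
    simp only [Matrix.trace, Matrix.diag_apply, Matrix.mul_apply, Matrix.transpose_apply]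
    rw [Finset.sum_comm]
  have h := Finset.sum_mul_sq_le_sq_mul_sq (Finset.univ ×ˢ (Finset.univ : Finset (Fin n)))
      (fun ij => P ij.1 ij.2) (fun ij => Q ij.1 ij.2)
  rw [etr P Q, etr P P, etr Q Q]
  calc ∑ ij ∈ Finset.univ ×ˢ (Finset.univ : Finset (Fin n)), P ij.1 ij.2 * Q ij.1 ij.2
      ≤ |∑ ij ∈ Finset.univ ×ˢ (Finset.univ : Finset (Fin n)), P ij.1 ij.2 * Q ij.1 ij.2| :=
        le_abs_self _
    _ = Real.sqrt ((∑ ij ∈ Finset.univ ×ˢ (Finset.univ : Finset (Fin n)), P ij.1 ij.2 * Q ij.1 ij.2)^2) :=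
        (Real.sqrt_sq_eq_abs _).symm
    _ ≤ Real.sqrt ((∑ ij ∈ Finset.univ ×ˢ (Finset.univ : Finset (Fin n)), P ij.1 ij.2 ^ 2) *
          (∑ ij ∈ Finset.univ ×ˢ (Finset.univ : Finset (Fin n)), Q ij.1 ij.2 ^2)) :=
        Real.sqrt_le_sqrt h
    _ = _ := by
        rw [Real.sqrt_mul (by positivity)]
        simp [sq]

lemma trace_XXtEtE_nonneg {m q r : ℕ} (X : Matrix (Fin m) (Fin r) ℝ) (E : Matrix (Fin q) (Fin m) ℝ) :
    0 ≤ (X * Xᵀ * (Eᵀ * E)).trace := by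
  have h1 : (X * Xᵀ * (Eᵀ * E)).trace = ((E * X) * (E * X)ᵀ).trace := by
    rw [← Matrix.mul_assoc, Matrix.trace_mul_comm]
    congr 1
    rw [Matrix.transpose_mul]
    simp only [Matrix.mul_assoc]
  rw [h1]
  have := trace_transpose_mul_self_nonneg (E * X)ᵀ
  rwa [Matrix.transpose_transpose] at this

lemma psd_decomp {p : ℕ} {A : Matrix (Fin p) (Fin p) ℝ} (hA : A.PosSemidef) :
    ∃ (U : Matrix (Fin p) (Fin p) ℝ) (lam : Fin p → ℝ),
      Uᵀ * U = 1 ∧ U * Uᵀ = 1 ∧ (∀ i, 0 ≤ lam i) ∧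
      A = U * Matrix.diagonal lam * Uᵀ ∧
      hA.sqrt = U * Matrix.diagonal (fun i => Real.sqrt (lam i)) * Uᵀ := by
  have h1 : (hA.1.eigenvectorUnitary.1 : Matrix (Fin p) (Fin p) ℝ)ᵀ * hA.1.eigenvectorUnitary.1 = 1 := by
    have := Matrix.UnitaryGroup.star_mul_self hA.1.eigenvectorUnitary
    rwa [Matrix.star_eq_conjTranspose, Matrix.conjTranspose_eq_transpose_of_trivial] at this
  refine ⟨hA.1.eigenvectorUnitary.1, hA.1.eigenvalues, h1, mul_eq_one_comm.mp h1,
    hA.eigenvalues_nonneg, ?_, ?_⟩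
  · have h := hA.1.spectral_theorem
    rw [Unitary.conjStarAlgAut_apply, Matrix.star_eq_conjTranspose,
      Matrix.conjTranspose_eq_transpose_of_trivial] at h
    exact h
  · rw [Matrix.PosSemidef.sqrt, Matrix.star_eq_conjTranspose,
      Matrix.conjTranspose_eq_transpose_of_trivial]
    rfl

lemma psd_sqrt_transpose {p : ℕ} {A : Matrix (Fin p) (Fin p) ℝ} (hA : A.PosSemidef) :
    (hA.sqrt)ᵀ = hA.sqrt := by
  obtain ⟨U, lam, hUU, hUUt, hlamnn, hspec, hsqrt⟩ := psd_decomp hA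
  rw [hsqrt, Matrix.transpose_mul, Matrix.transpose_mul, Matrix.transpose_transpose,
    Matrix.diagonal_transpose, Matrix.mul_assoc]

lemma psd_sqrt_mul_self {p : ℕ} {A : Matrix (Fin p) (Fin p) ℝ} (hA : A.PosSemidef) :
    hA.sqrt * hA.sqrt = A := by
  obtain ⟨U, lam, hUU, hUUt, hlamnn, hspec, hsqrt⟩ := psd_decomp hA
  have hd : Matrix.diagonal (fun i => Real.sqrt (lam i)) * Matrix.diagonal (fun i => Real.sqrt (lam i))
      = Matrix.diagonal lam := by
    rw [Matrix.diagonal_mul_diagonal]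
    congr 1
    funext i
    exact Real.mul_self_sqrt (hlamnn i)
  rw [hsqrt]
  conv_rhs => rw [hspec]
  calc _ = U * (Matrix.diagonal (fun i => Real.sqrt (lam i)) * (Uᵀ * U) *
        Matrix.diagonal (fun i => Real.sqrt (lam i))) * Uᵀ := by simp only [Matrix.mul_assoc]
    _ = _ := by rw [hUU, Matrix.mul_one, hd]

lemma nuclearNorm_mul_le {m n p : ℕ} (X : Matrix (Fin m) (Fin n) ℝ) (Y : Matrix (Fin n) (Fin p) ℝ) :
    nuclearNorm (X * Y) ≤ Real.sqrt ((Xᵀ * X).trace) * Real.sqrt ((Yᵀ * Y).trace) := by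
  have hA := Matrix.posSemidef_conjTranspose_mul_self (X * Y)
  obtain ⟨U, lam, hUU, hUUt, hlamnn, hspec, hsqrt⟩ := psd_decomp hA
  have htr : nuclearNorm (X * Y) = ∑ i, Real.sqrt (lam i) := by
    show hA.sqrt.trace = _
    rw [hsqrt, Matrix.trace_mul_cycle, hUU, Matrix.one_mul, Matrix.trace_diagonal]
  have hspec' : (X * Y)ᵀ * (X * Y) = U * Matrix.diagonal lam * Uᵀ := by
    rw [← Matrix.conjTranspose_eq_transpose_of_trivial (X * Y)]
    exact hspec
  obtain ⟨G, hG⟩ : ∃ G, G = X * Y * U := ⟨_, rfl⟩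
  obtain ⟨Gh, hGh⟩ : ∃ Gh, Gh = G * Matrix.diagonal (fun i => (Real.sqrt (lam i))⁻¹) := ⟨_, rfl⟩
  have hGG : Gᵀ * G = Matrix.diagonal lam := by
    rw [hG, Matrix.transpose_mul]
    calc Uᵀ * (X * Y)ᵀ * (X * Y * U) = Uᵀ * ((X * Y)ᵀ * (X * Y)) * U := by
          simp only [Matrix.mul_assoc]
      _ = Uᵀ * U * Matrix.diagonal lam * (Uᵀ * U) := by
          rw [hspec']; simp only [Matrix.mul_assoc]
      _ = Matrix.diagonal lam := by rw [hUU]; simp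
  have key0 : ∑ i, Real.sqrt (lam i) = (Ghᵀ * G).trace := by
    have e : Ghᵀ * G = Matrix.diagonal (fun i => (Real.sqrt (lam i))⁻¹ * lam i) := by
      rw [hGh, Matrix.transpose_mul, Matrix.diagonal_transpose, Matrix.mul_assoc, hGG,
        Matrix.diagonal_mul_diagonal]
    rw [e, Matrix.trace_diagonal]
    refine Finset.sum_congr rfl fun i _ => ?_
    rcases eq_or_ne (lam i) 0 with h | h
    · simp [h]
    · have hl : 0 < lam i := lt_of_le_of_ne (hlamnn i) (Ne.symm h)
      have hsne : Real.sqrt (lam i) ≠ 0 := by positivity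
      rw [eq_comm, inv_mul_eq_div, div_eq_iff hsne]
      exact (Real.mul_self_sqrt (hlamnn i)).symm
  have hGhentry : ∀ i j, Gh i j = G i j * (Real.sqrt (lam j))⁻¹ := by
    intro i j; rw [hGh, Matrix.mul_diagonal]
  have hGhchi : Gh * Matrix.diagonal (fun i => if lam i = 0 then (0:ℝ) else 1) = Gh := by
    ext i j
    rw [Matrix.mul_diagonal]
    rcases eq_or_ne (lam j) 0 with h | h
    · simp [h, hGhentry i j]
    · simp [h]
  have hGhGh : Ghᵀ * Gh = Matrix.diagonal (fun i => if lam i = 0 then (0:ℝ) else 1) := by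
    have e : Ghᵀ * Gh = Matrix.diagonal
        (fun i => (Real.sqrt (lam i))⁻¹ * lam i * (Real.sqrt (lam i))⁻¹) := by
      rw [hGh, Matrix.transpose_mul, Matrix.diagonal_transpose]
      calc Matrix.diagonal (fun i => (Real.sqrt (lam i))⁻¹) * Gᵀ *
            (G * Matrix.diagonal fun i => (Real.sqrt (lam i))⁻¹)
          = Matrix.diagonal (fun i => (Real.sqrt (lam i))⁻¹) * (Gᵀ * G) *
            Matrix.diagonal (fun i => (Real.sqrt (lam i))⁻¹) := by
            simp only [Matrix.mul_assoc]
        _ = _ := by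
            rw [hGG, Matrix.diagonal_mul_diagonal, Matrix.diagonal_mul_diagonal]
    rw [e]
    refine congrArg Matrix.diagonal (funext fun i => ?_)
    rcases eq_or_ne (lam i) 0 with h | h
    · simp [h]
    · rw [if_neg h]
      have hl : 0 < lam i := lt_of_le_of_ne (hlamnn i) (Ne.symm h)
      have hsne : Real.sqrt (lam i) ≠ 0 := by positivity
      field_simp
      rw [Real.sq_sqrt (hlamnn i)]
  obtain ⟨P, hP⟩ : ∃ P, P = Gh * Ghᵀ := ⟨_, rfl⟩
  have hPsymm : Pᵀ = P := by rw [hP, Matrix.transpose_mul, Matrix.transpose_transpose]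
  have hPP : P * P = P := by
    rw [hP]
    calc Gh * Ghᵀ * (Gh * Ghᵀ) = Gh * (Ghᵀ * Gh) * Ghᵀ := by simp only [Matrix.mul_assoc]
      _ = Gh * Ghᵀ := by rw [hGhGh, hGhchi]
  have step1 : (Ghᵀ * G).trace = ((Xᵀ * Gh)ᵀ * (Y * U)).trace := by
    rw [Matrix.transpose_mul, Matrix.transpose_transpose]
    rw [hG, show X * Y * U = X * (Y * U) by rw [Matrix.mul_assoc], ← Matrix.mul_assoc]
  have hYU : ((Y * U)ᵀ * (Y * U)).trace = (Yᵀ * Y).trace := by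
    rw [Matrix.transpose_mul]
    rw [show Uᵀ * Yᵀ * (Y * U) = Uᵀ * (Yᵀ * Y) * U by simp only [Matrix.mul_assoc]]
    rw [Matrix.trace_mul_cycle, ← Matrix.mul_assoc, hUUt, Matrix.one_mul]
  have hXG : ((Xᵀ * Gh)ᵀ * (Xᵀ * Gh)).trace ≤ (Xᵀ * X).trace := by
    have e1 : ((Xᵀ * Gh)ᵀ * (Xᵀ * Gh)).trace = ((X * Xᵀ) * P).trace := by
      rw [Matrix.transpose_mul, Matrix.transpose_transpose]
      rw [show Ghᵀ * X * (Xᵀ * Gh) = Ghᵀ * (X * Xᵀ) * Gh by simp only [Matrix.mul_assoc]]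
      rw [Matrix.trace_mul_cycle, ← hP, Matrix.trace_mul_comm]
    have e2 : (Xᵀ * X).trace = (X * Xᵀ).trace := Matrix.trace_mul_comm _ _
    rw [e1, e2]
    have hEE : (1 - P)ᵀ * (1 - P) = 1 - P := by
      rw [Matrix.transpose_sub, Matrix.transpose_one, hPsymm]
      rw [Matrix.sub_mul, Matrix.mul_sub, Matrix.mul_sub, hPP]
      simp
    have h0 := trace_XXtEtE_nonneg X (1 - P)
    rw [hEE, Matrix.mul_sub, Matrix.mul_one, Matrix.trace_sub] at h0
    linarith
  have cs := frob_cs (Xᵀ * Gh) (Y * U)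
  rw [hYU] at cs
  calc nuclearNorm (X * Y) = (Ghᵀ * G).trace := by rw [htr, key0]
    _ = ((Xᵀ * Gh)ᵀ * (Y * U)).trace := step1
    _ ≤ Real.sqrt (((Xᵀ * Gh)ᵀ * (Xᵀ * Gh)).trace) * Real.sqrt ((Yᵀ * Y).trace) := cs
    _ ≤ Real.sqrt ((Xᵀ * X).trace) * Real.sqrt ((Yᵀ * Y).trace) :=
        mul_le_mul_of_nonneg_right (Real.sqrt_le_sqrt hXG) (Real.sqrt_nonneg _)

lemma nuclearNorm_nonneg {m n : ℕ} (M : Matrix (Fin m) (Fin n) ℝ) : 0 ≤ nuclearNorm M := by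
  unfold nuclearNorm
  set hA := Matrix.posSemidef_conjTranspose_mul_self M
  obtain ⟨U, lam, hUU, hUUt, hlamnn, hspec, hsqrt⟩ := psd_decomp hA
  rw [hsqrt, Matrix.trace_mul_cycle, hUU, Matrix.one_mul, Matrix.trace_diagonal]
  exact Finset.sum_nonneg fun i _ => Real.sqrt_nonneg _

lemma prodUpTo_split (d : ℕ → ℕ) (W : ∀ k, Matrix (Fin (d (k + 1))) (Fin (d k)) ℝ)
    (l j : ℕ) : prodUpTo d W (j + l) = mulChain d W j l * prodUpTo d W j := by
  induction l with
  | zero => simp [mulChain]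
  | succ l ih =>
      show W (j + l) * prodUpTo d W (j + l) = (W (j + l) * mulChain d W j l) * prodUpTo d W j
      rw [ih, Matrix.mul_assoc]

lemma key_ineq (d : ℕ → ℕ) (W : ∀ k, Matrix (Fin (d (k + 1))) (Fin (d k)) ℝ)
    (Sx : Matrix (Fin (d 0)) (Fin (d 0)) ℝ) (hSx : Sx.PosSemidef)
    (D k : ℕ) (hk : k + 1 ≤ D) :
    nuclearNorm (prodUpTo d W D * hSx.sqrt) ^ 2 ≤
      ((mulChain d W (k + 1) (D - (k + 1)))ᵀ * mulChain d W (k + 1) (D - (k + 1))).trace *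
      ((prodUpTo d W (k + 1) * hSx.sqrt)ᵀ * (prodUpTo d W (k + 1) * hSx.sqrt)).trace := by
  obtain ⟨l, rfl⟩ : ∃ l, D = k + 1 + l := ⟨D - (k + 1), by omega⟩
  rw [Nat.add_sub_cancel_left]
  rw [prodUpTo_split d W l (k + 1), Matrix.mul_assoc]
  have h := nuclearNorm_mul_le (mulChain d W (k + 1) l) (prodUpTo d W (k + 1) * hSx.sqrt)
  have hnn := nuclearNorm_nonneg (mulChain d W (k + 1) l * (prodUpTo d W (k + 1) * hSx.sqrt))
  have ha := trace_transpose_mul_self_nonneg (mulChain d W (k + 1) l)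
  have hb := trace_transpose_mul_self_nonneg (prodUpTo d W (k + 1) * hSx.sqrt)
  calc nuclearNorm (mulChain d W (k + 1) l * (prodUpTo d W (k + 1) * hSx.sqrt)) ^ 2
      ≤ (Real.sqrt (((mulChain d W (k + 1) l)ᵀ * mulChain d W (k + 1) l).trace) *
          Real.sqrt (((prodUpTo d W (k + 1) * hSx.sqrt)ᵀ * (prodUpTo d W (k + 1) * hSx.sqrt)).trace)) ^ 2 :=
        pow_le_pow_left₀ hnn h 2
    _ = _ := by rw [mul_pow, Real.sq_sqrt ha, Real.sq_sqrt hb]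

/-- Lower bound on the sharpness of a deep linear network at an interpolating solution:
if `W_D ⋯ W_1 = V` then
`T(W_1,…,W_D) ≥ D · ‖V Σ^{1/2}‖_*^{2(D−1)/D} · (d_y · Tr Σ)^{1/D}`. -/
theorem sharpness_lower_bound (D : ℕ) (hD : 2 ≤ D) (d : ℕ → ℕ)
    (Sx : Matrix (Fin (d 0)) (Fin (d 0)) ℝ) (hSx : Sx.PosSemidef)
    (V : Matrix (Fin (d D)) (Fin (d 0)) ℝ)
    (W : ∀ k, Matrix (Fin (d (k + 1))) (Fin (d k)) ℝ)
    (hW : prodUpTo d W D = V) :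
    (D : ℝ) * nuclearNorm (V * hSx.sqrt) ^ (2 * ((D : ℝ) - 1) / D)
        * ((d D : ℝ) * Sx.trace) ^ ((1 : ℝ) / D)
      ≤ sharpnessT d W Sx D := by
  subst hW
  obtain ⟨m, rfl⟩ : ∃ m, D = m + 2 := ⟨D - 2, by omega⟩
  set N := nuclearNorm (prodUpTo d W (m + 2) * hSx.sqrt) with hNdef
  set a : ℕ → ℝ := fun k =>
    ((mulChain d W (k + 1) (m + 2 - (k + 1)))ᵀ * mulChain d W (k + 1) (m + 2 - (k + 1))).trace
    with hadef
  set b : ℕ → ℝ := fun k => (prodUpTo d W k * Sx * (prodUpTo d W k)ᵀ).trace with hbdef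
  have hT : sharpnessT d W Sx (m + 2) = ∑ k ∈ Finset.range (m + 2), a k * b k := rfl
  have hRsymm : (hSx.sqrt)ᵀ = hSx.sqrt := by
    exact psd_sqrt_transpose hSx
  have hbeq : ∀ k, b k = ((prodUpTo d W k * hSx.sqrt)ᵀ * (prodUpTo d W k * hSx.sqrt)).trace := by
    intro k
    have e1 : prodUpTo d W k * Sx * (prodUpTo d W k)ᵀ
        = (prodUpTo d W k * hSx.sqrt) * (prodUpTo d W k * hSx.sqrt)ᵀ := by
      conv_lhs => rw [← psd_sqrt_mul_self hSx]
      rw [Matrix.transpose_mul, hRsymm]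
      simp only [Matrix.mul_assoc]
    show (prodUpTo d W k * Sx * (prodUpTo d W k)ᵀ).trace = _
    rw [e1, Matrix.trace_mul_comm]
  have hann : ∀ k, 0 ≤ a k := fun k => trace_transpose_mul_self_nonneg _
  have hbnn : ∀ k, 0 ≤ b k := fun k => (hbeq k) ▸ trace_transpose_mul_self_nonneg _
  have hNnn : 0 ≤ N := nuclearNorm_nonneg _
  have hkey : ∀ k ∈ Finset.range (m + 1), N ^ 2 ≤ a k * b (k + 1) := by
    intro k hk
    rw [hbeq]
    exact key_ineq d W Sx hSx (m + 2) k (by simp only [Finset.mem_range] at hk; omega)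
  have haD : a (m + 1) = (d (m + 2) : ℝ) := by
    show ((mulChain d W (m + 1 + 1) (m + 2 - (m + 1 + 1)))ᵀ *
      mulChain d W (m + 1 + 1) (m + 2 - (m + 1 + 1))).trace = _
    rw [show m + 2 - (m + 1 + 1) = 0 by omega]
    simp [mulChain, Matrix.trace_one]
  have hb0 : b 0 = Sx.trace := by
    show (prodUpTo d W 0 * Sx * (prodUpTo d W 0)ᵀ).trace = _
    simp [prodUpTo]
  have hTrnn : 0 ≤ Sx.trace := hb0 ▸ hbnn 0
  have hprod : N ^ (2 * (m + 1)) * ((d (m + 2) : ℝ) * Sx.trace)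
      ≤ ∏ k ∈ Finset.range (m + 2), (a k * b k) := by
    have e1 : ∏ k ∈ Finset.range (m + 2), (a k * b k)
        = (∏ k ∈ Finset.range (m + 2), a k) * ∏ k ∈ Finset.range (m + 2), b k :=
      Finset.prod_mul_distrib
    have e2 : ∏ k ∈ Finset.range (m + 1), (a k * b (k + 1))
        = (∏ k ∈ Finset.range (m + 1), a k) * ∏ k ∈ Finset.range (m + 1), b (k + 1) :=
      Finset.prod_mul_distrib
    have e3 : (N ^ 2) ^ (m + 1) ≤ ∏ k ∈ Finset.range (m + 1), (a k * b (k + 1)) := by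
      calc (N ^ 2) ^ (m + 1) = ∏ _k ∈ Finset.range (m + 1), N ^ 2 := by
            rw [Finset.prod_const, Finset.card_range]
        _ ≤ _ := Finset.prod_le_prod (fun _ _ => sq_nonneg N) hkey
    calc N ^ (2 * (m + 1)) * ((d (m + 2) : ℝ) * Sx.trace)
        = (N ^ 2) ^ (m + 1) * (a (m + 1) * b 0) := by rw [haD, hb0, pow_mul]
      _ ≤ (∏ k ∈ Finset.range (m + 1), (a k * b (k + 1))) * (a (m + 1) * b 0) :=
          mul_le_mul_of_nonneg_right e3 (mul_nonneg (hann _) (hbnn _))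
      _ = ∏ k ∈ Finset.range (m + 2), (a k * b k) := by
          have pa : ∏ k ∈ Finset.range (m + 2), a k
              = (∏ k ∈ Finset.range (m + 1), a k) * a (m + 1) := Finset.prod_range_succ a (m + 1)
          have pb : ∏ k ∈ Finset.range (m + 2), b k
              = (∏ k ∈ Finset.range (m + 1), b (k + 1)) * b 0 := Finset.prod_range_succ' b (m + 1)
          rw [e2, e1, pa, pb]
          ring
  have hAM : ((m + 2 : ℕ) : ℝ) * (∏ k ∈ Finset.range (m + 2), (a k * b k)) ^ ((1 : ℝ) / ((m + 2 : ℕ) : ℝ))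
      ≤ ∑ k ∈ Finset.range (m + 2), a k * b k := by
    have hcpos : (0 : ℝ) < ((m + 2 : ℕ) : ℝ) := by positivity
    have hw : ∑ _k ∈ Finset.range (m + 2), (1 : ℝ) / ((m + 2 : ℕ) : ℝ) = 1 := by
      rw [Finset.sum_const, Finset.card_range, nsmul_eq_mul]
      field_simp
    have h := Real.geom_mean_le_arith_mean_weighted (Finset.range (m + 2))
        (fun _ => (1 : ℝ) / ((m + 2 : ℕ) : ℝ)) (fun k => a k * b k)
        (fun _ _ => by positivity) hw (fun k _ => mul_nonneg (hann k) (hbnn k))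
    rw [Real.finset_prod_rpow (Finset.range (m + 2)) _
        (fun k _ => mul_nonneg (hann k) (hbnn k)) _] at h
    have h2 : ∑ k ∈ Finset.range (m + 2), (1 : ℝ) / ((m + 2 : ℕ) : ℝ) * (a k * b k)
        = (1 / ((m + 2 : ℕ) : ℝ)) * ∑ k ∈ Finset.range (m + 2), a k * b k := by
      rw [Finset.mul_sum]
    rw [h2] at h
    calc ((m + 2 : ℕ) : ℝ) * (∏ k ∈ Finset.range (m + 2), (a k * b k)) ^ ((1 : ℝ) / ((m + 2 : ℕ) : ℝ))
        ≤ ((m + 2 : ℕ) : ℝ) * ((1 / ((m + 2 : ℕ) : ℝ)) * ∑ k ∈ Finset.range (m + 2), a k * b k) :=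
          mul_le_mul_of_nonneg_left h (le_of_lt hcpos)
      _ = ∑ k ∈ Finset.range (m + 2), a k * b k := by field_simp
  have hmono : (N ^ (2 * (m + 1)) * ((d (m + 2) : ℝ) * Sx.trace)) ^ ((1 : ℝ) / ((m + 2 : ℕ) : ℝ))
      ≤ (∏ k ∈ Finset.range (m + 2), (a k * b k)) ^ ((1 : ℝ) / ((m + 2 : ℕ) : ℝ)) :=
    Real.rpow_le_rpow (mul_nonneg (pow_nonneg hNnn _) (mul_nonneg (Nat.cast_nonneg _) hTrnn))
      hprod (by positivity)
  have hsplitpow : (N ^ (2 * (m + 1)) * ((d (m + 2) : ℝ) * Sx.trace)) ^ ((1 : ℝ) / ((m + 2 : ℕ) : ℝ))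
      = N ^ (2 * (((m + 2 : ℕ) : ℝ) - 1) / ((m + 2 : ℕ) : ℝ))
        * ((d (m + 2) : ℝ) * Sx.trace) ^ ((1 : ℝ) / ((m + 2 : ℕ) : ℝ)) := by
    rw [Real.mul_rpow (pow_nonneg hNnn _) (mul_nonneg (Nat.cast_nonneg _) hTrnn)]
    congr 1
    rw [← Real.rpow_natCast N (2 * (m + 1)), ← Real.rpow_mul hNnn]
    congr 1
    push_cast
    ring
  have final := le_trans (mul_le_mul_of_nonneg_left hmono
      (Nat.cast_nonneg (m + 2) : (0:ℝ) ≤ ((m + 2 : ℕ) : ℝ))) hAM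
  rw [hsplitpow] at final
  rw [hT]
  calc ((m + 2 : ℕ) : ℝ) * N ^ (2 * (((m + 2 : ℕ) : ℝ) - 1) / ((m + 2 : ℕ) : ℝ))
        * ((d (m + 2) : ℝ) * Sx.trace) ^ ((1 : ℝ) / ((m + 2 : ℕ) : ℝ))
      = ((m + 2 : ℕ) : ℝ) * (N ^ (2 * (((m + 2 : ℕ) : ℝ) - 1) / ((m + 2 : ℕ) : ℝ))
        * ((d (m + 2) : ℝ) * Sx.trace) ^ ((1 : ℝ) / ((m + 2 : ℕ) : ℝ))) := by ring
    _ ≤ _ := final
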